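/- arXiv:1810.06222 — 6 statements merged into one kernel-verified Lean document; each statement's English description precedes it below -/
import Mathlib

section
/- For every g = [[a,b],[c,d]] in SL₂(ℍ) and all quaternions z, w such that cz + d ≠ 0 and cw + d ≠ 0, one has n(g·z - g·w) = n(z - w) / (n(cz+d) n(cw+d)), where g·z = (az+b)(cz+d)⁻¹ denotes the homographic action and n is the reduced norm. -/
open Quaternion

private lemma normSq_sub_expand (x y : Quaternion ℝ) :
    normSq (x - y) = normSq x + normSq y - 2 * (x * star y).re := by
  simp only [normSq_def', Quaternion.re_sub, Quaternion.imI_sub, Quaternion.imJ_sub,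
    Quaternion.imK_sub, Quaternion.re_mul, Quaternion.re_star, Quaternion.imI_star,
    Quaternion.imJ_star, Quaternion.imK_star]
  ring

private lemma normSq_key (a b c d : Quaternion ℝ) :
    normSq (a * star c * d - normSq c • b)
      = normSq c * (normSq (a * d) + normSq (b * c) - 2 * (a * star c * d * star b).re) := by
  rw [normSq_sub_expand]
  have h1 : normSq (a * star c * d) = normSq c * normSq (a * d) := by
    simp only [map_mul, normSq_star]; ring
  have h2 : normSq (normSq c • b) = normSq c * normSq (b * c) := by
    rw [normSq_smul, map_mul]; ring
  have h3 : (a * star c * d * star (normSq c • b)).re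
      = normSq c * (a * star c * d * star b).re := by
    rw [Quaternion.star_smul, mul_smul_comm, Quaternion.re_smul]
    simp
  rw [h1, h2, h3]; ring

/-- Lemma 3.1: for `g = !![a,b;c,d]` in `SL₂(ℍ)` (Dieudonné determinant 1, i.e.
`n(ad) + n(bc) - tr(a c̄ d b̄) = 1`) and quaternions `z`, `w` with
`cz + d ≠ 0` and `cw + d ≠ 0`, one has
`n(g·z - g·w) = n(z - w) / (n(cz+d) n(cw+d))`,
where `g·z = (az+b)(cz+d)⁻¹` and `n = normSq` is the reduced norm. -/
theorem normSq_homography_sub (a b c d z w : Quaternion ℝ)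
    (hdet : normSq (a * d) + normSq (b * c) - 2 * (a * star c * d * star b).re = 1)
    (hz : c * z + d ≠ 0) (hw : c * w + d ≠ 0) :
    normSq ((a * z + b) * (c * z + d)⁻¹ - (a * w + b) * (c * w + d)⁻¹)
      = normSq (z - w) / (normSq (c * z + d) * normSq (c * w + d)) := by
  by_cases hc : c = 0
  · subst hc
    simp only [zero_mul, zero_add] at hz hw ⊢
    have h1 : normSq a * normSq d = 1 := by
      simpa [map_mul] using hdet
    have e : (a * z + b) * d⁻¹ - (a * w + b) * d⁻¹ = a * (z - w) * d⁻¹ := by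
      noncomm_ring
    rw [e, map_mul, map_mul, map_inv₀]
    have hnd : normSq d ≠ 0 := normSq_ne_zero.2 hz
    field_simp
    linear_combination normSq (z - w) * h1
  · have hnc : normSq c ≠ 0 := normSq_ne_zero.2 hc
    have hnP : normSq (c * z + d) ≠ 0 := normSq_ne_zero.2 hz
    have hnQ : normSq (c * w + d) ≠ 0 := normSq_ne_zero.2 hw
    -- Step 1: rewrite a - (aw+b)Q⁻¹c
    have hwb : a * w + b = a * c⁻¹ * (c * w + d) - (a * c⁻¹ * d - b) := by
      rw [mul_add, ← mul_assoc (a * c⁻¹) c w, mul_assoc a c⁻¹ c, inv_mul_cancel₀ hc, mul_one]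
      noncomm_ring
    have h3 : a - (a * w + b) * (c * w + d)⁻¹ * c
        = (a * c⁻¹ * d - b) * (c * w + d)⁻¹ * c := by
      rw [hwb, sub_mul, sub_mul, mul_assoc (a * c⁻¹) (c * w + d) (c * w + d)⁻¹,
        mul_inv_cancel₀ hw, mul_one, mul_assoc a c⁻¹ c, inv_mul_cancel₀ hc, mul_one]
      abel
    -- Step 2: difference factorization
    have key : (a * z + b) - (a * w + b) * (c * w + d)⁻¹ * (c * z + d)
        = (a - (a * w + b) * (c * w + d)⁻¹ * c) * (z - w) := by
      have e1 : (a * w + b) * (c * w + d)⁻¹ * (c * z + d)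
          = (a * w + b) * (c * w + d)⁻¹ * (c * w + d)
            + (a * w + b) * (c * w + d)⁻¹ * (c * (z - w)) := by
        noncomm_ring
      rw [e1, mul_assoc (a * w + b) (c * w + d)⁻¹ (c * w + d), inv_mul_cancel₀ hw, mul_one]
      noncomm_ring
    have hdiff : (a * z + b) * (c * z + d)⁻¹ - (a * w + b) * (c * w + d)⁻¹
        = ((a * c⁻¹ * d - b) * (c * w + d)⁻¹ * c) * (z - w) * (c * z + d)⁻¹ := by
      have e2 : (a * z + b) * (c * z + d)⁻¹ - (a * w + b) * (c * w + d)⁻¹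
          = ((a * z + b) - (a * w + b) * (c * w + d)⁻¹ * (c * z + d)) * (c * z + d)⁻¹ := by
        rw [sub_mul, mul_assoc ((a * w + b) * (c * w + d)⁻¹) (c * z + d) (c * z + d)⁻¹,
          mul_inv_cancel₀ hz, mul_one]
      rw [e2, key, h3]
    -- Step 3: norm of a*c⁻¹*d - b
    have e3 : a * c⁻¹ * d - b = (normSq c)⁻¹ • (a * star c * d - normSq c • b) := by
      rw [Quaternion.inv_def, smul_sub, smul_smul, inv_mul_cancel₀ hnc, one_smul,
        Algebra.mul_smul_comm, smul_mul_assoc]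
    have key3 : normSq (a * c⁻¹ * d - b) * normSq c = 1 := by
      rw [e3, normSq_smul, normSq_key, hdet]
      field_simp
    -- Finish
    have hN1 : normSq (a * c⁻¹ * d - b) = (normSq c)⁻¹ := eq_inv_of_mul_eq_one_left key3
    rw [hdiff]
    simp only [map_mul, map_inv₀, hN1]
    field_simp
end

section
/- Let f be a binary Hamiltonian form with matrix M(f) = [[a, b],[b̄, c]] (a, c ∈ ℝ, b ∈ ℍ), and for g ∈ SL₂(ℍ) let f∘g be the form with matrix g* M(f) g. Then the discriminant Δ(f) = n(b) - ac satisfies Δ(f∘g) = Δ(f). -/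
open Quaternion

noncomputable section

/-- The entries of the matrix `g* M(f) g` of the form `f ∘ g`, where
`M(f) = !![a, b; b̄, c]` and `g = !![p, q; r, s]`. -/
def actA (a c : ℝ) (b p q r s : Quaternion ℝ) : ℝ :=
  (star p * ((a : Quaternion ℝ) * p + b * r) + star r * (star b * p + (c : Quaternion ℝ) * r)).re

def actB (a c : ℝ) (b p q r s : Quaternion ℝ) : Quaternion ℝ :=
  star p * ((a : Quaternion ℝ) * q + b * s) + star r * (star b * q + (c : Quaternion ℝ) * s)

def actC (a c : ℝ) (b p q r s : Quaternion ℝ) : ℝ :=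
  (star q * ((a : Quaternion ℝ) * q + b * s) + star s * (star b * q + (c : Quaternion ℝ) * s)).re

set_option maxRecDepth 100000 in
lemma key (a c : ℝ) (b p q r s : Quaternion ℝ) :
    normSq (actB a c b p q r s) - actA a c b p q r s * actC a c b p q r s
      = (normSq b - a * c) *
        (normSq (p * s) + normSq (q * r) - 2 * (p * star r * s * star q).re) := by
  simp only [actA, actB, actC, Quaternion.normSq_def', Quaternion.re_mul, Quaternion.imI_mul,
    Quaternion.imJ_mul, Quaternion.imK_mul, Quaternion.re_add, Quaternion.imI_add,
    Quaternion.imJ_add, Quaternion.imK_add, Quaternion.re_star, Quaternion.imI_star,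
    Quaternion.imJ_star, Quaternion.imK_star, Quaternion.re_coe, Quaternion.imI_coe,
    Quaternion.imJ_coe, Quaternion.imK_coe]
  ring

/-- For a binary Hamiltonian form `f` with matrix `M(f) = !![a,b;b̄,c]`
(`a, c ∈ ℝ`, `b ∈ ℍ`) and `g = !![p,q;r,s] ∈ SL₂(ℍ)` (Dieudonné determinant 1),
the form `f ∘ g` with matrix `g* M(f) g` has the same discriminant
`Δ(f) = n(b) - a c`. -/
theorem discr_invariant_under_SL2 (a c : ℝ) (b p q r s : Quaternion ℝ)
    (hdet : normSq (p * s) + normSq (q * r) - 2 * (p * star r * s * star q).re = 1) :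
    normSq (actB a c b p q r s) - actA a c b p q r s * actC a c b p q r s
      = normSq b - a * c := by
  rw [key, hdet, mul_one]
end
end

section
/- If the maximal order 𝒪 in a definite quaternion algebra over ℚ is left-Euclidean (i.e., for all a, b ∈ 𝒪 with b ≠ 0, there exist c, d ∈ 𝒪 with a = cb + d and n(d) < n(b)), then SL₂(𝒪) is generated by the matrices J = [[0,1],[1,0]], T_w = [[1,w],[0,1]] for w ∈ 𝒪, and C_{u,v} = [[u,0],[0,v]] for units u, v of 𝒪. -/
open Quaternion

noncomputable section

set_option maxHeartbeats 1000000
set_option synthInstance.maxHeartbeats 1000000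

/-- `A` is a definite quaternion algebra over ℚ, realized as a ℚ-subalgebra of
Hamilton's quaternions: it has dimension 4 over ℚ and spans ℍ over ℝ
(i.e. `A ⊗_ℚ ℝ = ℍ`). -/
def IsDefiniteQuatAlg (A : Subalgebra ℚ (Quaternion ℝ)) : Prop :=
  Module.finrank ℚ A = 4 ∧ Submodule.span ℝ (A : Set (Quaternion ℝ)) = ⊤

/-- `O` is an order in `A`: a unitary subring of `A` which is a finitely
generated ℤ-module generating `A` as a ℚ-vector space. -/
def IsOrder (A : Subalgebra ℚ (Quaternion ℝ)) (O : Subring (Quaternion ℝ)) : Prop :=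
  (O : Set (Quaternion ℝ)) ⊆ (A : Set (Quaternion ℝ)) ∧
  (∃ s : Finset (Quaternion ℝ), AddSubgroup.closure (s : Set (Quaternion ℝ)) = O.toAddSubgroup) ∧
  Submodule.span ℚ (O : Set (Quaternion ℝ)) = Subalgebra.toSubmodule A

/-- `O` is a maximal order in `A`. -/
def IsMaximalOrder (A : Subalgebra ℚ (Quaternion ℝ)) (O : Subring (Quaternion ℝ)) : Prop :=
  IsOrder A O ∧ ∀ O' : Subring (Quaternion ℝ), IsOrder A O' → O ≤ O' → O' = O

/-- The left fractional ideal `O x + O y` of `O`, as a subset of ℍ. -/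
def idSet (O : Subring (Quaternion ℝ)) (x y : Quaternion ℝ) : Set (Quaternion ℝ) :=
  {m | ∃ o₁ ∈ O, ∃ o₂ ∈ O, m = o₁ * x + o₂ * y}

/-- The reduced norm of a (fractional) left ideal of `O`, given as a subset of
ℍ: the greatest common divisor of the reduced norms of its elements, i.e. the
largest positive real `t` such that every `n(m)`, `m ∈ s`, is an integer
multiple of `t`. -/
def idealNorm (s : Set (Quaternion ℝ)) : ℝ :=
  sSup {t : ℝ | 0 < t ∧ ∀ m ∈ s, ∃ k : ℤ, normSq m = t * k}

/-- The generators of `SL₂(O)`: `J = !![0,1;1,0]`. -/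
def Jmat : Matrix (Fin 2) (Fin 2) (Quaternion ℝ) := !![0, 1; 1, 0]

/-- `T_w = !![1,w;0,1]`. -/
def Tmat (w : Quaternion ℝ) : Matrix (Fin 2) (Fin 2) (Quaternion ℝ) := !![1, w; 0, 1]

/-- `C_{u,v} = !![u,0;0,v]`. -/
def Cmat (u v : Quaternion ℝ) : Matrix (Fin 2) (Fin 2) (Quaternion ℝ) := !![u, 0; 0, v]

/-! ### Auxiliary lemmas -/

section Aux

/-- Evaluation of an integer polynomial commutes with quaternion conjugation. -/
theorem star_eval₂aux (p : Polynomial ℤ) (x : Quaternion ℝ) :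
    Polynomial.eval₂ (algebraMap ℤ (Quaternion ℝ)) (star x) p
      = star (Polynomial.eval₂ (algebraMap ℤ (Quaternion ℝ)) x p) := by
  simp only [Polynomial.eval₂_eq_sum, Polynomial.sum]
  rw [star_sum]
  refine Finset.sum_congr rfl fun i _ => ?_
  rw [star_mul, star_pow]
  simp [Int.cast_comm]

theorem isIntegral_star_aux {x : Quaternion ℝ} (h : IsIntegral ℤ x) :
    IsIntegral ℤ (star x) := by
  obtain ⟨p, hp, hpx⟩ := h
  exact ⟨p, hp, by rw [star_eval₂aux, hpx, star_zero]⟩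

/-- Elements of an order are integral over ℤ. -/
theorem integral_of_mem_aux (O : Subring (Quaternion ℝ))
    (hfg : ∃ s : Finset (Quaternion ℝ),
      AddSubgroup.closure (s : Set (Quaternion ℝ)) = O.toAddSubgroup)
    {x : Quaternion ℝ} (hx : x ∈ O) : IsIntegral ℤ x := by
  obtain ⟨s, hs⟩ := hfg
  refine IsIntegral.of_mem_of_fg (subalgebraOfSubring O) ?_ x hx
  refine ⟨s, le_antisymm (Submodule.span_le.2 ?_) fun y hy => ?_⟩
  · intro z hz
    have : z ∈ AddSubgroup.closure (s : Set (Quaternion ℝ)) := AddSubgroup.subset_closure hz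
    rw [hs] at this
    exact this
  · have hy' : y ∈ AddSubgroup.closure (s : Set (Quaternion ℝ)) := by
      rw [hs]; exact hy
    refine AddSubgroup.closure_induction ?_ ?_ ?_ ?_ hy'
    · exact fun z hz => Submodule.subset_span hz
    · exact Submodule.zero_mem _
    · exact fun a b _ _ ha hb => Submodule.add_mem _ ha hb
    · exact fun a _ ha => Submodule.neg_mem _ ha

/-- A rational number that is integral over ℤ is an integer. -/
theorem rat_integer_aux {q : ℚ} (h : IsIntegral ℤ ((q : ℂ))) : ∃ k : ℤ, (k : ℚ) = q := by
  have hcast : ((q : ℂ)) = algebraMap ℚ ℂ q := (eq_ratCast (algebraMap ℚ ℂ) q).symm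
  rw [hcast] at h
  have hq : IsIntegral ℤ q :=
    (isIntegral_algHom_iff (algebraMap ℚ ℂ).toIntAlgHom ((algebraMap ℚ ℂ).injective)).mp h
  letI : IsIntegrallyClosed ℤ := GCDMonoid.toIsIntegrallyClosed
  exact IsIntegrallyClosed.isIntegral_iff.mp hq

/-- An integral quaternion with rational reduced trace and norm has integer
reduced trace and norm. -/
theorem trace_norm_int_aux {x : Quaternion ℝ} (hx : IsIntegral ℤ x)
    (ht : ∃ q : ℚ, (q : ℝ) = 2 * x.re) (hn : ∃ q : ℚ, (q : ℝ) = normSq x) :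
    (∃ k : ℤ, (k : ℝ) = 2 * x.re) ∧ (∃ k : ℤ, (k : ℝ) = normSq x) := by
  obtain ⟨qt, hqt⟩ := ht
  obtain ⟨qn, hqn⟩ := hn
  set c : ℝ := Real.sqrt (normSq x.im) with hc
  have hc2 : c * c = normSq x.im := Real.mul_self_sqrt (normSq_nonneg (a := x.im))
  have himim : x.im * x.im = -((normSq x.im : ℝ) : Quaternion ℝ) := by
    have hstar : star x.im = -x.im := by ext <;> simp
    rw [← Quaternion.self_mul_star x.im, hstar, mul_neg, neg_neg]
  obtain ⟨u, huu, hcu⟩ : ∃ u : Quaternion ℝ, u * u = -1 ∧ c • u = x.im := by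
    by_cases him : x.im = 0
    · refine ⟨⟨0,1,0,0⟩, ?_, ?_⟩
      · ext <;> simp [Quaternion.ext_iff] <;> erw [QuaternionAlgebra.mk_mul_mk] <;> simp
      · have : c = 0 := by simp [hc, him]
        simp [this, him]
        exact zero_smul ℝ _
    · have hnsimpos : 0 < normSq x.im :=
        lt_of_le_of_ne (normSq_nonneg (a := x.im)) (Ne.symm (by simpa using him))
      have hcpos : 0 < c := Real.sqrt_pos.mpr hnsimpos
      refine ⟨c⁻¹ • x.im, ?_, ?_⟩
      · rw [smul_mul_smul_comm, himim, smul_neg, Quaternion.smul_coe,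
          show c⁻¹ * c⁻¹ * normSq x.im = 1 by field_simp; nlinarith [hc2]]
        simp
      · rw [smul_smul, mul_inv_cancel₀ hcpos.ne', one_smul]
  set φ : ℂ →ₐ[ℝ] Quaternion ℝ := Complex.liftAux u huu with hφ
  set z : ℂ := ⟨x.re, c⟩ with hz
  have hφz : φ z = x := by
    rw [hφ, Complex.liftAux_apply]
    show (algebraMap ℝ (Quaternion ℝ)) x.re + c • u = x
    rw [hcu]
    exact x.re_add_im
  have hφinj : Function.Injective φ := φ.toRingHom.injective
  have hzint : IsIntegral ℤ z := by
    refine (isIntegral_algHom_iff φ.toRingHom.toIntAlgHom hφinj).mp ?_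
    have h : φ.toRingHom.toIntAlgHom z = x := hφz
    rw [h]; convert hx; exact Subsingleton.elim _ _
  have hconj : IsIntegral ℤ ((starRingEnd ℂ) z) := hzint.map (starRingEnd ℂ).toIntAlgHom
  constructor
  · have hadd : IsIntegral ℤ (((2 * x.re : ℝ)) : ℂ) := by
      have := hzint.add hconj
      rwa [Complex.add_conj] at this
    have : IsIntegral ℤ ((qt : ℂ)) := by
      rw [show ((qt:ℂ)) = (((qt:ℝ)):ℂ) by push_cast; ring, hqt]; exact hadd
    obtain ⟨k, hk⟩ := rat_integer_aux this
    exact ⟨k, by rw [← hqt, ← hk]; push_cast; ring⟩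
  · have hnz : Complex.normSq z = normSq x := by
      rw [Complex.normSq_apply]
      show x.re * x.re + c * c = normSq x
      rw [hc2]
      simp [Quaternion.normSq_def', Quaternion.im, Quaternion.ext_iff]
      rw [show QuaternionAlgebra.im x = Quaternion.im x from rfl]
      simp [Quaternion.normSq_def']
      ring
    have hmul : IsIntegral ℤ ((normSq x : ℝ) : ℂ) := by
      have := hzint.mul hconj
      rwa [Complex.mul_conj, hnz] at this
    have : IsIntegral ℤ ((qn : ℂ)) := by
      rw [show ((qn:ℂ)) = (((qn:ℝ)):ℂ) by push_cast; ring, hqn]; exact hmul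
    obtain ⟨k, hk⟩ := rat_integer_aux this
    exact ⟨k, by rw [← hqn, ← hk]; push_cast; ring⟩

/-- The real part of any element of a definite quaternion algebra over ℚ is
rational (trace argument). -/
theorem re_rat_aux (A : Subalgebra ℚ (Quaternion ℝ)) (hA : IsDefiniteQuatAlg A) :
    ∀ x ∈ A, ∃ q : ℚ, (q : ℝ) = x.re := by
  have hfd : Module.Finite ℚ A := Module.finite_of_finrank_pos (by rw [hA.1]; norm_num)
  set b : Module.Basis (Fin 4) ℚ A := Module.finBasisOfFinrankEq ℚ A hA.1 with hb
  set e : Fin 4 → Quaternion ℝ := fun i => (b i : Quaternion ℝ) with he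
  have hmem : ∀ y : Quaternion ℝ, y ∈ A → y ∈ Submodule.span ℝ (Set.range e) := by
    intro y hy
    have hrepr := b.sum_repr ⟨y, hy⟩
    have : (y : Quaternion ℝ) = ∑ i, ((b.repr ⟨y, hy⟩ i : ℚ) : ℝ) • e i := by
      conv_lhs => rw [show y = ((⟨y, hy⟩ : A) : Quaternion ℝ) from rfl, ← hrepr]
      rw [AddSubmonoidClass.coe_finset_sum]
      refine Finset.sum_congr rfl fun i _ => ?_
      rw [SetLike.val_smul, ← ratCast_smul_eq ℚ ℝ]
      norm_num
      rfl
    rw [this]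
    exact Submodule.sum_mem _ fun i _ =>
      Submodule.smul_mem _ _ (Submodule.subset_span (Set.mem_range_self i))
  have hspan : ⊤ ≤ Submodule.span ℝ (Set.range e) := by
    rw [← hA.2]
    exact Submodule.span_le.2 fun y hy => hmem y hy
  set eB : Module.Basis (Fin 4) ℝ (Quaternion ℝ) :=
    basisOfTopLeSpanOfCardEqFinrank e hspan
      (by simp [Quaternion.finrank_eq_four]) with heBdef
  have heB : ⇑eB = e := coe_basisOfTopLeSpanOfCardEqFinrank e hspan _
  have hcoord : ∀ y : Quaternion ℝ, (hy : y ∈ A) → ∀ j,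
      eB.repr y j = ((b.repr ⟨y, hy⟩ j : ℚ) : ℝ) := by
    intro y hy j
    have hyr : (y : Quaternion ℝ) = ∑ i, ((b.repr ⟨y, hy⟩ i : ℚ) : ℝ) • eB i := by
      rw [heB]
      conv_lhs => rw [show y = ((⟨y, hy⟩ : A) : Quaternion ℝ) from rfl, ← b.sum_repr ⟨y, hy⟩]
      rw [AddSubmonoidClass.coe_finset_sum]
      refine Finset.sum_congr rfl fun i _ => ?_
      rw [SetLike.val_smul, ← ratCast_smul_eq ℚ ℝ]
      norm_num
      rfl
    conv_lhs => rw [hyr]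
    rw [Module.Basis.repr_sum_self]
  intro x hx
  set f : Quaternion ℝ →ₗ[ℝ] Quaternion ℝ := LinearMap.mulLeft ℝ x with hf
  have htr1 : LinearMap.trace ℝ (Quaternion ℝ) f = ∑ j, eB.repr (x * e j) j := by
    rw [LinearMap.trace_eq_matrix_trace ℝ eB f, Matrix.trace]
    refine Finset.sum_congr rfl fun j _ => ?_
    rw [Matrix.diag_apply, LinearMap.toMatrix_apply, heB]
    rfl
  have htr2 : LinearMap.trace ℝ (Quaternion ℝ) f = 4 * x.re := by
    refine Eq.trans
      (LinearMap.trace_eq_matrix_trace ℝ (QuaternionAlgebra.basisOneIJK (-1) 0 (-1)) f) ?_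
    rw [Matrix.trace]
    simp only [Matrix.diag_apply, LinearMap.toMatrix_apply, hf, LinearMap.mulLeft_apply]
    rw [Fin.sum_univ_four]
    erw [LinearMap.toMatrix_apply, LinearMap.toMatrix_apply, LinearMap.toMatrix_apply, LinearMap.toMatrix_apply]
    simp [QuaternionAlgebra.basisOneIJK, Module.Basis.coe_ofEquivFun]
    erw [LinearMap.mulLeft_apply, LinearMap.mulLeft_apply, LinearMap.mulLeft_apply, LinearMap.mulLeft_apply]
    erw [QuaternionAlgebra.re_mul, QuaternionAlgebra.imI_mul, QuaternionAlgebra.imJ_mul, QuaternionAlgebra.imK_mul]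
    simp
    ring
  have hmemA : ∀ j, x * e j ∈ A := fun j => A.mul_mem hx (b j).2
  set qs : Fin 4 → ℚ := fun j => b.repr ⟨x * e j, hmemA j⟩ j with hqs
  have hsum : (((∑ j, qs j) : ℚ) : ℝ) = 4 * x.re := by
    rw [← htr2, htr1]
    push_cast
    exact (Finset.sum_congr rfl fun j _ => (hcoord (x * e j) (hmemA j) j)).symm
  exact ⟨(∑ j, qs j) / 4, by rw [Rat.cast_div]; rw [hsum]; norm_num⟩

/-- The reduced norm of any element of a definite quaternion algebra over ℚ is
rational. -/
theorem normSq_rat_aux (A : Subalgebra ℚ (Quaternion ℝ)) (hA : IsDefiniteQuatAlg A) :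
    ∀ x ∈ A, ∃ q : ℚ, (q : ℝ) = normSq x := by
  intro x hx
  obtain ⟨q1, h1⟩ := re_rat_aux A hA x hx
  obtain ⟨q2, h2⟩ := re_rat_aux A hA (x * x) (A.mul_mem hx hx)
  refine ⟨2 * q1 ^ 2 - q2, ?_⟩
  have hid : normSq x = 2 * x.re ^ 2 - (x * x).re := by
    simp [Quaternion.normSq_def', Quaternion.re_mul]
    ring
  rw [hid]
  push_cast
  rw [h1, h2]

/-- Trace and norm integrality for elements of an order. -/
theorem order_int_aux (A : Subalgebra ℚ (Quaternion ℝ)) (O : Subring (Quaternion ℝ))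
    (hA : IsDefiniteQuatAlg A) (hOrd : IsOrder A O) :
    ∀ x ∈ O, (∃ k : ℤ, (k : ℝ) = 2 * x.re) ∧ (∃ k : ℤ, (k : ℝ) = normSq x) := by
  intro x hx
  have hxA : x ∈ A := hOrd.1 hx
  obtain ⟨q1, h1⟩ := re_rat_aux A hA x hxA
  refine trace_norm_int_aux (integral_of_mem_aux O hOrd.2.1 hx) ⟨2 * q1, ?_⟩
    (normSq_rat_aux A hA x hxA)
  push_cast
  rw [h1]

/-- Orders are closed under quaternion conjugation. -/
theorem star_mem_aux (A : Subalgebra ℚ (Quaternion ℝ)) (O : Subring (Quaternion ℝ))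
    (hA : IsDefiniteQuatAlg A) (hOrd : IsOrder A O) :
    ∀ x ∈ O, star x ∈ O := by
  intro x hx
  obtain ⟨⟨k, hk⟩, -⟩ := order_int_aux A O hA hOrd x hx
  have hstar : star x = (((k : ℝ)) : Quaternion ℝ) - x := by
    rw [hk, ← Quaternion.self_add_star' x, add_sub_cancel_left]
  rw [hstar]
  refine O.sub_mem ?_ hx
  rw [show (((k : ℝ)) : Quaternion ℝ) = ((k : ℤ) : Quaternion ℝ) by push_cast; ring]
  exact intCast_mem O k

/-- Invariance of the squared Dieudonné determinant under the Euclidean step. -/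
theorem det_inv_step_aux (q a b c d : Quaternion ℝ) :
    normSq (c * (b - q * d)) + normSq (d * (a - q * c))
      - 2 * (c * star (a - q * c) * (b - q * d) * star d).re
    = normSq (a * d) + normSq (b * c) - 2 * (a * star c * d * star b).re := by
  simp only [Quaternion.normSq_def', Quaternion.re_mul, Quaternion.imI_mul,
    Quaternion.imJ_mul, Quaternion.imK_mul, Quaternion.re_sub, Quaternion.imI_sub,
    Quaternion.imJ_sub, Quaternion.imK_sub, Quaternion.re_star, Quaternion.imI_star,
    Quaternion.imJ_star, Quaternion.imK_star]
  ring

theorem mat_step_aux (q a b c d : Quaternion ℝ) :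
    !![a, b; c, d] = Tmat q * (Jmat * !![c, d; a - q * c, b - q * d]) := by
  rw [Jmat, Tmat, Matrix.mul_fin_two, Matrix.mul_fin_two]
  apply Matrix.ext
  intro i j
  fin_cases i <;> fin_cases j <;> simp <;> noncomm_ring

theorem mat_triv_aux (a b d : Quaternion ℝ) (h1 : normSq a = 1) :
    !![a, b; 0, d] = Cmat a d * Tmat (star a * b) := by
  rw [Cmat, Tmat, Matrix.mul_fin_two]
  have : a * (star a * b) = b := by
    rw [← mul_assoc, Quaternion.self_mul_star, h1]
    simp
  rw [this]
  apply Matrix.ext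
  intro i j
  fin_cases i <;> fin_cases j <;> simp

end Aux

/-- If a maximal order `O` in a definite quaternion algebra `A` over ℚ is
left-Euclidean, then every element of `SL₂(O)` (entries in `O`, Dieudonné
determinant 1, the latter squared being `n(ad) + n(bc) - tr(a c̄ d b̄)`) is a
product of the matrices `J`, `T_w` (`w ∈ O`) and `C_{u,v}` (`u, v` units of
`O`, i.e. elements of reduced norm 1). -/
theorem SL2_generated_by_elementary (A : Subalgebra ℚ (Quaternion ℝ))
    (O : Subring (Quaternion ℝ)) (hA : IsDefiniteQuatAlg A) (hO : IsMaximalOrder A O)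
    (hEuc : ∀ a ∈ O, ∀ b ∈ O, b ≠ 0 →
      ∃ c ∈ O, ∃ d ∈ O, a = c * b + d ∧ normSq d < normSq b)
    (M : Matrix (Fin 2) (Fin 2) (Quaternion ℝ))
    (hM : ∀ i j, M i j ∈ O)
    (hdet : normSq (M 0 0 * M 1 1) + normSq (M 0 1 * M 1 0)
      - 2 * (M 0 0 * star (M 1 0) * M 1 1 * star (M 0 1)).re = 1) :
    M ∈ Submonoid.closure
      ({Jmat} ∪ {m | ∃ w ∈ O, m = Tmat w} ∪
        {m | ∃ u ∈ O, ∃ v ∈ O, normSq u = 1 ∧ normSq v = 1 ∧ m = Cmat u v}) := by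
  set S : Set (Matrix (Fin 2) (Fin 2) (Quaternion ℝ)) :=
    {Jmat} ∪ {m | ∃ w ∈ O, m = Tmat w} ∪
      {m | ∃ u ∈ O, ∃ v ∈ O, normSq u = 1 ∧ normSq v = 1 ∧ m = Cmat u v} with hS
  have hOrd : IsOrder A O := hO.1
  have hJ : Jmat ∈ Submonoid.closure S :=
    Submonoid.subset_closure (Set.mem_union_left _ (Set.mem_union_left _ rfl))
  have hT : ∀ w ∈ O, Tmat w ∈ Submonoid.closure S := fun w hw =>
    Submonoid.subset_closure (Set.mem_union_left _ (Set.mem_union_right _ ⟨w, hw, rfl⟩))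
  have hC : ∀ u ∈ O, ∀ v ∈ O, normSq u = 1 → normSq v = 1 →
      Cmat u v ∈ Submonoid.closure S := fun u hu v hv h1 h2 =>
    Submonoid.subset_closure (Set.mem_union_right _ ⟨u, hu, v, hv, h1, h2, rfl⟩)
  -- the descent
  have descent : ∀ n : ℕ, ∀ a b c d : Quaternion ℝ, a ∈ O → b ∈ O → c ∈ O → d ∈ O →
      (normSq (a * d) + normSq (b * c) - 2 * (a * star c * d * star b).re = 1) →
      normSq c = (n : ℝ) → !![a, b; c, d] ∈ Submonoid.closure S := by
    intro n
    induction n using Nat.strong_induction_on with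
    | _ n ih =>
      intro a b c d ha hb hc hd hdet hn
      by_cases hc0 : c = 0
      · -- triangular case
        subst hc0
        have hdet' : normSq a * normSq d = 1 := by
          have h := hdet
          simp only [mul_zero, zero_mul, map_zero, star_zero, add_zero,
            Quaternion.re_zero, sub_zero, map_mul] at h
          exact h
        obtain ⟨-, ka, hka⟩ := order_int_aux A O hA hOrd a ha
        obtain ⟨-, kd, hkd⟩ := order_int_aux A O hA hOrd d hd
        have hint : ka * kd = 1 := by
          have : ((ka * kd : ℤ) : ℝ) = 1 := by push_cast; rw [hka, hkd, hdet']
          exact_mod_cast this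
        have hcases := Int.eq_one_or_neg_one_of_mul_eq_one' hint
        have hka1 : normSq a = 1 ∧ normSq d = 1 := by
          rcases hcases with ⟨h1, h2⟩ | ⟨h1, h2⟩
          · constructor
            · rw [← hka, h1]; norm_num
            · rw [← hkd, h2]; norm_num
          · exfalso
            have : (0:ℝ) ≤ normSq a := normSq_nonneg (a := a)
            rw [← hka, h1] at this
            norm_num at this
        rw [mat_triv_aux a b d hka1.1]
        exact Submonoid.mul_mem _ (hC a ha d hd hka1.1 hka1.2)
          (hT (star a * b) (O.mul_mem (star_mem_aux A O hA hOrd a ha) hb))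
      · -- Euclidean step
        obtain ⟨q, hq, r, hr, heq, hlt⟩ := hEuc a ha c hc hc0
        have hrval : a - q * c = r := by rw [heq, add_sub_cancel_left]
        obtain ⟨-, kr, hkr⟩ := order_int_aux A O hA hOrd r hr
        have hkr0 : 0 ≤ kr := by
          have : (0:ℝ) ≤ (kr:ℝ) := by rw [hkr]; exact normSq_nonneg (a := r)
          exact_mod_cast this
        have hmn : kr.toNat < n := by
          have h1 : (kr:ℝ) < (n:ℝ) := by rw [hkr, ← hn]; exact hlt
          have h2 : (kr:ℤ) < (n:ℤ) := by exact_mod_cast h1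
          omega
        have hdet'' : normSq (c * (b - q * d)) + normSq (d * (a - q * c))
            - 2 * (c * star (a - q * c) * (b - q * d) * star d).re = 1 := by
          rw [det_inv_step_aux]; exact hdet
        have hM' : !![c, d; a - q * c, b - q * d] ∈ Submonoid.closure S := by
          refine ih kr.toNat hmn c d (a - q * c) (b - q * d) hc hd
            (O.sub_mem ha (O.mul_mem hq hc)) (O.sub_mem hb (O.mul_mem hq hd)) hdet'' ?_
          rw [hrval, ← hkr]
          exact_mod_cast (congrArg (fun z : ℤ => (z : ℝ)) (Int.toNat_of_nonneg hkr0)).symm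
        rw [mat_step_aux q a b c d]
        exact Submonoid.mul_mem _ (hT q hq) (Submonoid.mul_mem _ hJ hM')
  -- apply the descent to M
  obtain ⟨-, k, hk⟩ := order_int_aux A O hA hOrd (M 1 0) (hM 1 0)
  have hk0 : 0 ≤ k := by
    have : (0:ℝ) ≤ (k:ℝ) := by rw [hk]; exact normSq_nonneg (a := M 1 0)
    exact_mod_cast this
  have hMn : normSq (M 1 0) = ((k.toNat : ℕ) : ℝ) := by
    rw [← hk]
    exact_mod_cast (congrArg (fun z : ℤ => (z : ℝ)) (Int.toNat_of_nonneg hk0)).symm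
  rw [Matrix.eta_fin_two M]
  exact descent k.toNat (M 0 0) (M 0 1) (M 1 0) (M 1 1)
    (hM 0 0) (hM 0 1) (hM 1 0) (hM 1 1) hdet hMn
end
end

section
/- Let 𝒪 be a maximal order in a definite quaternion algebra A over ℚ, and for α ∈ A let I_α = 𝒪α + 𝒪 and f_α(u,v) = n(u - αv)/n(I_α). Then for every g = [[a,b],[c,d]] ∈ SL₂(A) and α = xy⁻¹ with x, y ∈ A, one has f_{g·α} ∘ g = (n(𝒪x + 𝒪y) / n(𝒪(ax+by) + 𝒪(cx+dy))) · f_α. In particular f_{g·α} ∘ g = f_α when g ∈ SL₂(𝒪). -/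
open Quaternion

noncomputable section

/-! ### Auxiliary material -/

section Aux

open Pointwise

set_option synthInstance.maxHeartbeats 1000000
set_option maxHeartbeats 1000000

abbrev HQ := Quaternion ℝ

lemma normSq_sub'' (p q : HQ) :
    normSq (p - q) = normSq p + normSq q - 2 * (p * star q).re := by
  simp only [Quaternion.normSq_def', Quaternion.re_mul, Quaternion.re_sub,
    Quaternion.imI_sub, Quaternion.imJ_sub, Quaternion.imK_sub, Quaternion.re_star,
    Quaternion.imI_star, Quaternion.imJ_star, Quaternion.imK_star]
  ring

lemma keyE (a b c d α : HQ) :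
    normSq (c*α+d) * normSq a + normSq (a*α+b) * normSq c
      - 2 * (a * (star c * (c*α+d) * star (a*α+b))).re
      = normSq (a*d) + normSq (b*c) - 2*(a * star c * d * star b).re := by
  simp only [Quaternion.normSq_def', Quaternion.re_mul, Quaternion.imI_mul,
    Quaternion.imJ_mul, Quaternion.imK_mul, Quaternion.re_add, Quaternion.imI_add,
    Quaternion.imJ_add, Quaternion.imK_add, Quaternion.re_star,
    Quaternion.imI_star, Quaternion.imJ_star, Quaternion.imK_star]
  ring

lemma keyId (a b c d α : HQ) (hw : c * α + d ≠ 0) :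
    normSq (a - (a * α + b) * (c * α + d)⁻¹ * c) * normSq (c * α + d)
      = normSq (a * d) + normSq (b * c) - 2 * (a * star c * d * star b).re := by
  set w := c * α + d with hwdef
  set z := a * α + b with hzdef
  have hnw : normSq w ≠ 0 := normSq_ne_zero.2 hw
  have hinv : w⁻¹ = (normSq w)⁻¹ • star w := rfl
  have h1 : a - z * w⁻¹ * c = (normSq w)⁻¹ • ((normSq w) • a - z * (star w * c)) := by
    rw [hinv, smul_sub, smul_smul, inv_mul_cancel₀ hnw, one_smul]
    congr 1
    rw [mul_smul_comm, smul_mul_assoc, mul_assoc]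
  have e3 : (((normSq w) • a) * star (z * (star w * c))).re
      = normSq w * (a * (star c * w * star z)).re := by
    rw [star_mul, star_mul, star_star, smul_mul_assoc]
    simp only [Quaternion.re_smul, smul_eq_mul]
  have h2 : normSq ((normSq w) • a - z * (star w * c))
      = normSq w * (normSq (a*d) + normSq (b*c) - 2*(a * star c * d * star b).re) := by
    rw [normSq_sub'', normSq_smul, map_mul, map_mul, normSq_star, e3,
      ← keyE a b c d α, ← hwdef, ← hzdef]
    ring
  rw [h1, normSq_smul, h2]
  field_simp

def Tset (s : Set HQ) : Set ℝ := {t : ℝ | 0 < t ∧ ∀ m ∈ s, ∃ k : ℤ, normSq m = t * k}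

lemma idealNorm_eq (s : Set HQ) : idealNorm s = sSup (Tset s) := rfl

lemma idSet_mul (O : Subring HQ) (p r q : HQ) :
    idSet O (p*q) (r*q) = (fun m => m * q) '' idSet O p r := by
  ext m
  constructor
  · rintro ⟨o₁, h₁, o₂, h₂, rfl⟩
    exact ⟨o₁ * p + o₂ * r, ⟨o₁, h₁, o₂, h₂, rfl⟩, by noncomm_ring⟩
  · rintro ⟨m', ⟨o₁, h₁, o₂, h₂, rfl⟩, rfl⟩
    exact ⟨o₁, h₁, o₂, h₂, by noncomm_ring⟩

lemma Tset_mul (s : Set HQ) (q : HQ) (hq : q ≠ 0) :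
    Tset ((fun m => m * q) '' s) = normSq q • Tset s := by
  have hnq : (0:ℝ) < normSq q := lt_of_le_of_ne normSq_nonneg (Ne.symm (normSq_ne_zero.2 hq))
  ext t
  constructor
  · rintro ⟨ht, h⟩
    refine ⟨t / normSq q, ⟨div_pos ht hnq, fun m hm => ?_⟩, by
      simp [smul_eq_mul]; field_simp⟩
    obtain ⟨k, hk⟩ := h (m * q) ⟨m, hm, rfl⟩
    rw [map_mul] at hk
    refine ⟨k, ?_⟩
    rw [div_mul_eq_mul_div, eq_div_iff hnq.ne']
    linarith [hk]
  · rintro ⟨t₀, ⟨ht₀, h⟩, rfl⟩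
    refine ⟨by simpa [smul_eq_mul] using mul_pos hnq ht₀, ?_⟩
    rintro m ⟨m', hm', rfl⟩
    obtain ⟨k, hk⟩ := h m' hm'
    exact ⟨k, by rw [map_mul, hk]; simp [smul_eq_mul]; ring⟩

lemma idealNorm_mul (O : Subring HQ) (p r q : HQ) (hq : q ≠ 0) :
    idealNorm (idSet O (p*q) (r*q)) = normSq q * idealNorm (idSet O p r) := by
  rw [idealNorm_eq, idealNorm_eq, idSet_mul, Tset_mul _ _ hq,
    Real.sSup_smul_of_nonneg normSq_nonneg, smul_eq_mul]

lemma Tset_nonempty_of_map (s₁ s₂ : Set HQ) (N : ℕ) (hN : 0 < N)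
    (h : ∀ m ∈ s₁, ((N:ℝ)) • m ∈ s₂) (hne : (Tset s₂).Nonempty) : (Tset s₁).Nonempty := by
  obtain ⟨t, ht, hdiv⟩ := hne
  have hN2 : (0:ℝ) < (N:ℝ)^2 := by positivity
  refine ⟨t / (N:ℝ)^2, div_pos ht hN2, fun m hm => ?_⟩
  obtain ⟨k, hk⟩ := hdiv _ (h m hm)
  rw [normSq_smul] at hk
  refine ⟨k, ?_⟩
  rw [div_mul_eq_mul_div, eq_div_iff hN2.ne']
  linarith [hk]

lemma pos_of_Tset_nonempty (O : Subring HQ) (γ : HQ)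
    (hne : (Tset (idSet O γ 1)).Nonempty) : 0 < sSup (Tset (idSet O γ 1)) := by
  have h1 : (1:HQ) ∈ idSet O γ 1 := ⟨0, O.zero_mem, 1, O.one_mem, by simp⟩
  have hbdd : BddAbove (Tset (idSet O γ 1)) := by
    refine ⟨1, fun t ht => ?_⟩
    obtain ⟨k, hk⟩ := ht.2 1 h1
    rw [map_one] at hk
    have hkpos : (0:ℝ) < (k:ℝ) := by nlinarith [ht.1]
    have hk0 : (0:ℤ) < k := by exact_mod_cast hkpos
    have hk1 : (1:ℝ) ≤ (k:ℝ) := by exact_mod_cast hk0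
    nlinarith [ht.1]
  obtain ⟨t, ht⟩ := hne
  exact lt_of_lt_of_le ht.1 (le_csSup hbdd ht)

lemma inv_mem_alg (A : Subalgebra ℚ HQ) (hfr : Module.finrank ℚ A = 4)
    {z : HQ} (hz : z ∈ A) : z⁻¹ ∈ A := by
  rcases eq_or_ne z 0 with rfl | h0
  · rw [inv_zero]; exact A.zero_mem
  · haveI : FiniteDimensional ℚ A := .of_finrank_pos (by rw [hfr]; norm_num)
    let L : A →ₗ[ℚ] A :=
      { toFun := fun w => ⟨z * (w : HQ), A.mul_mem hz w.2⟩
        map_add' := fun w₁ w₂ => by apply Subtype.ext; simp [mul_add]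
        map_smul' := fun q w => by apply Subtype.ext; simp [mul_smul_comm] }
    have hinj : Function.Injective L := by
      intro w₁ w₂ h
      have h' : z * (w₁ : HQ) = z * (w₂ : HQ) := congrArg Subtype.val h
      exact Subtype.ext (mul_left_cancel₀ h0 h')
    obtain ⟨w, hw⟩ := LinearMap.surjective_of_injective hinj ⟨1, A.one_mem⟩
    have hw' : z * (w : HQ) = 1 := congrArg Subtype.val hw
    rw [inv_eq_of_mul_eq_one_right hw']
    exact w.2

lemma nat_smul_mem (O : Subring HQ) (n : ℕ) {o : HQ} (ho : o ∈ O) : (n:ℝ) • o ∈ O := by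
  rw [← Quaternion.coe_mul_eq_smul, Quaternion.coe_natCast]
  exact O.mul_mem (natCast_mem O n) ho

lemma exists_nsmul_mem (O : Subring HQ) (A : Subalgebra ℚ HQ)
    (hspan : Submodule.span ℚ (O : Set HQ) = Subalgebra.toSubmodule A)
    {q : HQ} (hq : q ∈ A) : ∃ N : ℕ, 0 < N ∧ (N:ℝ) • q ∈ O := by
  have hq' : q ∈ Submodule.span ℚ (O : Set HQ) := by rw [hspan]; exact hq
  clear hq
  induction hq' using Submodule.span_induction with
  | mem x hx => exact ⟨1, one_pos, by simpa using hx⟩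
  | zero => exact ⟨1, one_pos, by rw [smul_zero]; exact O.zero_mem⟩
  | add x y hx hy ihx ihy =>
    obtain ⟨N₁, h₁, m₁⟩ := ihx
    obtain ⟨N₂, h₂, m₂⟩ := ihy
    refine ⟨N₁ * N₂, Nat.mul_pos h₁ h₂, ?_⟩
    rw [smul_add]
    refine O.add_mem ?_ ?_
    · have : ((N₁ * N₂ : ℕ):ℝ) • x = (N₂:ℝ) • ((N₁:ℝ) • x) := by
        rw [smul_smul]; push_cast; ring_nf
      rw [this]; exact nat_smul_mem O N₂ m₁
    · have : ((N₁ * N₂ : ℕ):ℝ) • y = (N₁:ℝ) • ((N₂:ℝ) • y) := by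
        rw [smul_smul]; push_cast; ring_nf
      rw [this]; exact nat_smul_mem O N₁ m₂
  | smul r x hx ihx =>
    obtain ⟨N, hN, hm⟩ := ihx
    refine ⟨N * r.den, Nat.mul_pos hN r.pos, ?_⟩
    have hden : (r.den:ℚ) * r = (r.num:ℚ) := by
      rw [mul_comm]
      nth_rewrite 1 [← Rat.num_div_den r]
      field_simp
    have key : ((N * r.den : ℕ):ℝ) • (r • x) = (r.num • ((N:ℝ) • x)) := by
      rw [Nat.cast_smul_eq_nsmul, ← Nat.cast_smul_eq_nsmul (R := ℚ) (N * r.den) (r • x),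
        smul_smul, Nat.cast_smul_eq_nsmul (R := ℝ) N x,
        ← Nat.cast_smul_eq_nsmul (R := ℚ) N x, ← Int.cast_smul_eq_zsmul (R := ℚ), smul_smul]
      congr 1
      push_cast
      rw [mul_assoc, hden]
      ring
    rw [key]
    exact zsmul_mem hm r.num

end Aux

set_option maxHeartbeats 1000000 in
/-- Proposition 3.2: let `O` be a maximal order in a definite quaternion algebra
`A` over ℚ. For `α ∈ A`, let `I_α = Oα + O` and let `f_α` be the form
`f_α(u,v) = n(u - αv) / n(I_α)`. Then for `g = !![a,b;c,d] ∈ SL₂(A)` and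
`α = x y⁻¹` (with `x, y ∈ A`, `y ≠ 0`, and `g·α = (aα+b)(cα+d)⁻¹ ≠ ∞`), one has
`f_{g·α} ∘ g = (n(Ox + Oy) / n(O(ax+by) + O(cx+dy))) · f_α`,
where `g` acts linearly on pairs by `g(u,v) = (au+bv, cu+dv)`. -/
theorem form_falpha_equivariance (A : Subalgebra ℚ (Quaternion ℝ))
    (O : Subring (Quaternion ℝ)) (hA : IsDefiniteQuatAlg A) (hO : IsMaximalOrder A O)
    (a b c d x y α β : Quaternion ℝ)
    (ha : a ∈ A) (hb : b ∈ A) (hc : c ∈ A) (hd : d ∈ A) (hx : x ∈ A) (hy : y ∈ A)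
    (hdet : normSq (a * d) + normSq (b * c) - 2 * (a * star c * d * star b).re = 1)
    (hy0 : y ≠ 0) (hα : α = x * y⁻¹)
    (hden : c * α + d ≠ 0) (hβ : β = (a * α + b) * (c * α + d)⁻¹) :
    ∀ u v : Quaternion ℝ,
      normSq ((a * u + b * v) - β * (c * u + d * v)) / idealNorm (idSet O β 1)
        = (idealNorm (idSet O x y) / idealNorm (idSet O (a * x + b * y) (c * x + d * y)))
          * (normSq (u - α * v) / idealNorm (idSet O α 1)) := by
  intro u v
  have hxa : α * y = x := by rw [hα, inv_mul_cancel_right₀ hy0]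
  have hβw : β * (c * α + d) = a * α + b := by rw [hβ, inv_mul_cancel_right₀ hden]
  have hnw : (0:ℝ) < normSq (c*α+d) :=
    lt_of_le_of_ne normSq_nonneg (Ne.symm (normSq_ne_zero.2 hden))
  have hny : (0:ℝ) < normSq y :=
    lt_of_le_of_ne normSq_nonneg (Ne.symm (normSq_ne_zero.2 hy0))
  -- factorization of the numerator
  have hnum : (a * u + b * v) - β * (c * u + d * v) = (a - β * c) * (u - α * v) := by
    have e : (a*u+b*v) - β*(c*u+d*v) - (a - β*c) * (u - α*v)
        = ((a*α+b) - β*(c*α+d)) * v := by noncomm_ring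
    rw [hβw, sub_self, zero_mul] at e
    exact sub_eq_zero.1 e
  -- the key determinant identity
  have hkey : normSq (a - β * c) * normSq (c*α+d) = 1 := by
    rw [hβ, keyId a b c d α hden]
    exact hdet
  -- norms of the ideals
  have hN1 : idealNorm (idSet O x y) = normSq y * idealNorm (idSet O α 1) := by
    have h : idSet O x y = idSet O (α*y) (1*y) := by rw [hxa, one_mul]
    rw [h, idealNorm_mul O α 1 y hy0]
  have e2 : a*x+b*y = (a*α+b)*y := by rw [← hxa]; noncomm_ring
  have e3 : c*x+d*y = (c*α+d)*y := by rw [← hxa]; noncomm_ring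
  have hmid : idealNorm (idSet O (a*α+b) (c*α+d))
      = normSq (c*α+d) * idealNorm (idSet O β 1) := by
    have h : idSet O (a*α+b) (c*α+d) = idSet O (β*(c*α+d)) (1*(c*α+d)) := by
      rw [hβw, one_mul]
    rw [h, idealNorm_mul O β 1 (c*α+d) hden]
  have hN2 : idealNorm (idSet O (a*x+b*y) (c*x+d*y))
      = normSq y * (normSq (c*α+d) * idealNorm (idSet O β 1)) := by
    rw [e2, e3, idealNorm_mul O (a*α+b) (c*α+d) y hy0, hmid]
  -- degenerate-norm bridge
  have hPQ : idealNorm (idSet O α 1) = 0 → idealNorm (idSet O β 1) = 0 := by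
    intro hP
    by_contra hQ
    have hTβ : (Tset (idSet O β 1)).Nonempty := by
      by_contra hcon
      rw [Set.not_nonempty_iff_eq_empty] at hcon
      exact hQ (by rw [idealNorm_eq, hcon, Real.sSup_empty])
    have hT2 : (Tset (idSet O (a*α+b) (c*α+d))).Nonempty := by
      have hs : idSet O (a*α+b) (c*α+d) = (fun m => m * (c*α+d)) '' idSet O β 1 := by
        have h := idSet_mul O β 1 (c*α+d)
        rw [hβw, one_mul] at h
        exact h
      rw [hs, Tset_mul _ _ hden]
      exact hTβ.smul_set
    have hαA : α ∈ A := by rw [hα]; exact A.mul_mem hx (inv_mem_alg A hA.1 hy)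
    have hwA : (c*α+d) ∈ A := A.add_mem (A.mul_mem hc hαA) hd
    have hwiA : (c*α+d)⁻¹ ∈ A := inv_mem_alg A hA.1 hwA
    obtain ⟨p, s, hpA, hsA, hps⟩ :
        ∃ p s : Quaternion ℝ, p ∈ A ∧ s ∈ A ∧ α = p * (a*α+b) + s * (c*α+d) := by
      have h1 : (c*α+d)⁻¹ * (c*α+d) = 1 := inv_mul_cancel₀ hden
      by_cases hc0 : c = 0
      · have ha0 : a ≠ 0 := by
          intro h
          rw [h, hc0] at hdet
          simp at hdet
        have h2 : a⁻¹ * a = 1 := inv_mul_cancel₀ ha0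
        refine ⟨a⁻¹, -(a⁻¹*b*(c*α+d)⁻¹), inv_mem_alg A hA.1 ha,
          A.neg_mem (A.mul_mem (A.mul_mem (inv_mem_alg A hA.1 ha) hb) hwiA), ?_⟩
        rw [mul_add, ← mul_assoc, h2, one_mul, neg_mul, mul_assoc (a⁻¹*b), h1, mul_one]
        abel
      · have h2 : c⁻¹ * c = 1 := inv_mul_cancel₀ hc0
        refine ⟨0, c⁻¹ - c⁻¹*d*(c*α+d)⁻¹, A.zero_mem,
          A.sub_mem (inv_mem_alg A hA.1 hc)
            (A.mul_mem (A.mul_mem (inv_mem_alg A hA.1 hc) hd) hwiA), ?_⟩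
        rw [zero_mul, zero_add, sub_mul, mul_assoc (c⁻¹*d), h1, mul_one, mul_add,
          ← mul_assoc, h2, one_mul]
        abel
    obtain ⟨N₁, hN₁, hm₁⟩ := exists_nsmul_mem O A hO.1.2.2 hpA
    obtain ⟨N₂, hN₂, hm₂⟩ := exists_nsmul_mem O A hO.1.2.2 hsA
    obtain ⟨N₃, hN₃, hm₃⟩ := exists_nsmul_mem O A hO.1.2.2 hwiA
    have hNpos : 0 < N₁ * N₂ * N₃ := by positivity
    have hmm₁ : ((N₁*N₂*N₃ : ℕ):ℝ) • p ∈ O := by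
      have h : ((N₁*N₂*N₃ : ℕ):ℝ) • p = ((N₂*N₃ : ℕ):ℝ) • ((N₁:ℝ) • p) := by
        rw [smul_smul]; push_cast; ring_nf
      rw [h]; exact nat_smul_mem O _ hm₁
    have hmm₂ : ((N₁*N₂*N₃ : ℕ):ℝ) • s ∈ O := by
      have h : ((N₁*N₂*N₃ : ℕ):ℝ) • s = ((N₁*N₃ : ℕ):ℝ) • ((N₂:ℝ) • s) := by
        rw [smul_smul]; push_cast; ring_nf
      rw [h]; exact nat_smul_mem O _ hm₂
    have hmm₃ : ((N₁*N₂*N₃ : ℕ):ℝ) • (c*α+d)⁻¹ ∈ O := by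
      have h : ((N₁*N₂*N₃ : ℕ):ℝ) • (c*α+d)⁻¹ = ((N₁*N₂ : ℕ):ℝ) • ((N₃:ℝ) • (c*α+d)⁻¹) := by
        rw [smul_smul]; push_cast; ring_nf
      rw [h]; exact nat_smul_mem O _ hm₃
    have hmap : ∀ m ∈ idSet O α 1,
        ((N₁*N₂*N₃ : ℕ):ℝ) • m ∈ idSet O (a*α+b) (c*α+d) := by
      rintro m ⟨o₁, h₁, o₂, h₂, rfl⟩
      set N : ℝ := ((N₁*N₂*N₃ : ℕ):ℝ) with hNdef
      refine ⟨o₁ * (N • p), O.mul_mem h₁ hmm₁,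
        o₁ * (N • s) + o₂ * (N • (c*α+d)⁻¹),
        O.add_mem (O.mul_mem h₁ hmm₂) (O.mul_mem h₂ hmm₃), ?_⟩
      have expand : o₁*α + o₂*1
          = o₁*p*(a*α+b) + (o₁*s*(c*α+d) + o₂*((c*α+d)⁻¹*(c*α+d))) := by
        rw [inv_mul_cancel₀ hden]
        nth_rewrite 1 [hps]
        noncomm_ring
      rw [expand]
      simp only [mul_smul_comm, smul_mul_assoc, smul_add, add_mul, mul_assoc]
    have hTα : (Tset (idSet O α 1)).Nonempty :=
      Tset_nonempty_of_map _ _ (N₁*N₂*N₃) hNpos hmap hT2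
    have hpos := pos_of_Tset_nonempty O α hTα
    rw [idealNorm_eq] at hP
    exact absurd hP hpos.ne'
  -- final arithmetic over ℝ
  rw [hnum, map_mul, hN1, hN2]
  by_cases hP0 : idealNorm (idSet O α 1) = 0
  · rw [hP0, hPQ hP0]
    simp
  · by_cases hQ0 : idealNorm (idSet O β 1) = 0
    · rw [hQ0]
      simp
    · have hns : normSq (a - β * c) = (normSq (c*α+d))⁻¹ :=
        eq_inv_of_mul_eq_one_left hkey
      rw [hns]
      field_simp
end
end

section
/- For x = (z,r) in the upper halfspace ℍ⁵_ℝ and α = [u : v] ∈ ℙ¹_r(A) with u, v ∈ 𝒪, one has d_α(x) = Θ(x)(u,v) / n(𝒪u + 𝒪v), where Θ(x) is the positive definite binary Hamiltonian form with matrix (1/r)[[1,-z],[-z̄, n(z)+r²]]. -/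
open Quaternion

noncomputable section

/-- The positive definite binary Hamiltonian form `Θ(z,r)` of matrix
`(1/r)·!![1, -z; -z̄, n(z)+r²]`, evaluated at `(u,v)`. -/
def thetaEval (z : Quaternion ℝ) (r : ℝ) (u v : Quaternion ℝ) : ℝ :=
  (normSq u - 2 * (star u * z * v).re + (normSq z + r ^ 2) * normSq v) / r


set_option synthInstance.maxHeartbeats 1000000
set_option maxHeartbeats 2000000

section AuxLemmas
open Polynomial

lemma trace_mulLeft (x : Quaternion ℝ) :
    LinearMap.trace ℝ (Quaternion ℝ) (LinearMap.mulLeft ℝ x) = 4 * x.re := by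
  show LinearMap.trace ℝ (QuaternionAlgebra ℝ (-1) 0 (-1)) (LinearMap.mulLeft ℝ x) = 4 * x.re
  rw [LinearMap.trace_eq_matrix_trace ℝ (QuaternionAlgebra.basisOneIJK (-1) 0 (-1))]
  simp [Matrix.trace, LinearMap.toMatrix_apply, Fin.sum_univ_four,
    QuaternionAlgebra.basisOneIJK, Algebra.leftMulMatrix_eq_repr_mul,
    Module.Basis.ofEquivFun_repr_apply, Module.Basis.coe_ofEquivFun,
    QuaternionAlgebra.equivTuple_apply]
  change (x * (show Quaternion ℝ from ⟨1, 0, 0, 0⟩)).re + (x * (show Quaternion ℝ from ⟨0, 1, 0, 0⟩)).imI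
    + (x * (show Quaternion ℝ from ⟨0, 0, 1, 0⟩)).imJ + (x * (show Quaternion ℝ from ⟨0, 0, 0, 1⟩)).imK = 4 * x.re
  rw [Quaternion.re_mul, Quaternion.imI_mul, Quaternion.imJ_mul, Quaternion.imK_mul]
  ring

lemma quat_quadratic (o : Quaternion ℝ) :
    o ^ 2 - (2 * o.re) • o + ((normSq o : ℝ) : Quaternion ℝ) = 0 := by
  ext <;>
    simp [pow_two, Quaternion.normSq_def', Quaternion.re_mul, Quaternion.imI_mul,
      Quaternion.imJ_mul, Quaternion.imK_mul] <;>
    ring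

lemma exists_rat_re (A : Subalgebra ℚ (Quaternion ℝ)) (hA : IsDefiniteQuatAlg A) :
    ∀ a ∈ A, ∃ q : ℚ, a.re = (q : ℝ) := by
  have hfd : FiniteDimensional ℚ A := Module.finite_of_finrank_eq_succ (n := 3) hA.1
  let b : Module.Basis (Fin 4) ℚ A := Module.finBasisOfFinrankEq ℚ A hA.1
  set f : Fin 4 → Quaternion ℝ := fun i => (b i : Quaternion ℝ) with hf
  have hcoe : ∀ x : A, (x : Quaternion ℝ) = ∑ i, ((b.repr x i : ℚ) : ℝ) • f i := by
    intro x
    conv_lhs => rw [← Module.Basis.sum_repr b x]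
    push_cast
    refine Finset.sum_congr rfl fun i _ => ?_
    rw [Rat.cast_smul_eq_qsmul]
  have hspan : ⊤ ≤ Submodule.span ℝ (Set.range f) := by
    rw [← hA.2]
    refine Submodule.span_le.2 ?_
    intro x hx
    rw [show x = ((⟨x, hx⟩ : A) : Quaternion ℝ) from rfl, hcoe ⟨x, hx⟩]
    exact Submodule.sum_mem _ fun i _ =>
      Submodule.smul_mem _ _ (Submodule.subset_span ⟨i, rfl⟩)
  have hcard : Fintype.card (Fin 4) = Module.finrank ℝ (Quaternion ℝ) := by
    simp [Quaternion.finrank_eq_four]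
  let e : Module.Basis (Fin 4) ℝ (Quaternion ℝ) := basisOfTopLeSpanOfCardEqFinrank f hspan hcard
  have hce : ⇑e = f := coe_basisOfTopLeSpanOfCardEqFinrank f hspan hcard
  have hrepr : ∀ (x : A) (i : Fin 4), e.repr (x : Quaternion ℝ) i = ((b.repr x i : ℚ) : ℝ) := by
    intro x i
    have : (x : Quaternion ℝ) = ∑ j, ((b.repr x j : ℚ) : ℝ) • e j := by
      rw [hce]; exact hcoe x
    rw [this]
    simp [Finsupp.single_apply]
  intro a ha
  have htr : LinearMap.trace ℝ (Quaternion ℝ) (LinearMap.mulLeft ℝ a)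
      = ∑ i, e.repr (a * f i) i := by
    rw [LinearMap.trace_eq_matrix_trace ℝ e, Matrix.trace]
    refine Finset.sum_congr rfl fun i _ => ?_
    simp [Matrix.diag, LinearMap.toMatrix_apply, hce]
  have hrat : ∀ i : Fin 4, e.repr (a * f i) i
      = ((b.repr ((⟨a, ha⟩ : A) * b i) i : ℚ) : ℝ) := by
    intro i
    have : a * f i = (((⟨a, ha⟩ : A) * b i : A) : Quaternion ℝ) := rfl
    rw [this, hrepr]
  refine ⟨(∑ i, b.repr ((⟨a, ha⟩ : A) * b i) i) / 4, ?_⟩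
  have h4 : 4 * a.re = ((∑ i, b.repr ((⟨a, ha⟩ : A) * b i) i : ℚ) : ℝ) := by
    rw [← trace_mulLeft a, htr]
    push_cast
    exact Finset.sum_congr rfl fun i _ => hrat i
  push_cast at h4 ⊢
  linarith

lemma exists_rat_normSq (A : Subalgebra ℚ (Quaternion ℝ)) (hA : IsDefiniteQuatAlg A) :
    ∀ a ∈ A, ∃ q : ℚ, (normSq a : ℝ) = (q : ℝ) := by
  intro a ha
  obtain ⟨q₁, hq₁⟩ := exists_rat_re A hA a ha
  obtain ⟨q₂, hq₂⟩ := exists_rat_re A hA (a * a) (mul_mem ha ha)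
  refine ⟨2 * q₁ ^ 2 - q₂, ?_⟩
  have h : (normSq a : ℝ) = 2 * a.re ^ 2 - (a * a).re := by
    simp [Quaternion.normSq_def', Quaternion.re_mul]
    ring
  rw [h, hq₁, hq₂]
  push_cast
  ring

lemma isIntegral_of_mem (O : Subring (Quaternion ℝ))
    (hfg : ∃ s : Finset (Quaternion ℝ),
      AddSubgroup.closure (s : Set (Quaternion ℝ)) = O.toAddSubgroup) :
    ∀ o ∈ O, IsIntegral ℤ o := by
  obtain ⟨s, hs⟩ := hfg
  intro o ho
  refine IsIntegral.of_mem_of_fg (subalgebraOfSubring O) ⟨s, ?_⟩ o ho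
  apply Submodule.toAddSubgroup_injective
  rw [Submodule.span_int_eq_addSubgroupClosure, hs]
  rfl

lemma exists_int_normSq (A : Subalgebra ℚ (Quaternion ℝ)) (O : Subring (Quaternion ℝ))
    (hA : IsDefiniteQuatAlg A) (hO : IsOrder A O) :
    ∀ o ∈ O, ∃ k : ℤ, (normSq o : ℝ) = (k : ℝ) := by
  intro o ho
  have hoA : o ∈ A := hO.1 ho
  obtain ⟨q₁, hq₁⟩ := exists_rat_re A hA o hoA
  obtain ⟨q₂, hq₂⟩ := exists_rat_normSq A hA o hoA
  have hint : IsIntegral ℤ o := isIntegral_of_mem O hO.2.1 o ho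
  by_cases h0 : o = ((o.re : ℝ) : Quaternion ℝ)
  · have hcast : o = algebraMap ℚ (Quaternion ℝ) q₁ := by
      rw [h0, hq₁]; rfl
    have hi : IsIntegral ℤ q₁ := by
      have hinj : Function.Injective (algebraMap ℚ (Quaternion ℝ)).toIntAlgHom :=
        (algebraMap ℚ (Quaternion ℝ)).injective
      exact (isIntegral_algHom_iff (algebraMap ℚ (Quaternion ℝ)).toIntAlgHom hinj).mp
        (hcast ▸ hint)
    obtain ⟨y, hy⟩ := IsIntegrallyClosed.isIntegral_iff.mp hi
    refine ⟨y ^ 2, ?_⟩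
    rw [eq_intCast] at hy
    rw [h0, Quaternion.normSq_coe, hq₁, ← hy]
    push_cast
    ring
  · have him : o.imI ^ 2 + o.imJ ^ 2 + o.imK ^ 2 ≠ 0 := by
      intro h
      apply h0
      have h1 : o.imI = 0 := by nlinarith [sq_nonneg o.imI, sq_nonneg o.imJ, sq_nonneg o.imK]
      have h2 : o.imJ = 0 := by nlinarith [sq_nonneg o.imI, sq_nonneg o.imJ, sq_nonneg o.imK]
      have h3 : o.imK = 0 := by nlinarith [sq_nonneg o.imI, sq_nonneg o.imJ, sq_nonneg o.imK]
      ext <;> simp [h1, h2, h3]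
    have hlt : (q₁ : ℝ) ^ 2 < (q₂ : ℝ) := by
      rw [← hq₁, ← hq₂]
      have : (normSq o : ℝ) = o.re ^ 2 + (o.imI ^ 2 + o.imJ ^ 2 + o.imK ^ 2) := by
        simp [Quaternion.normSq_def']; ring
      have hpos : 0 < o.imI ^ 2 + o.imJ ^ 2 + o.imK ^ 2 := by
        rcases lt_or_eq_of_le (by positivity : (0:ℝ) ≤ o.imI ^ 2 + o.imJ ^ 2 + o.imK ^ 2) with h | h
        · exact h
        · exact absurd h.symm him
      linarith
    set p : ℚ[X] := X ^ 2 - C (2 * q₁) * X + C q₂ with hp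
    have hpdeg : p.natDegree = 2 := by
      rw [hp]; compute_degree!
    have hpmonic : p.Monic := by
      rw [Monic, Polynomial.leadingCoeff, hpdeg, hp]
      simp [coeff_X_pow, coeff_C]
    have hproot : Polynomial.aeval o p = 0 := by
      have e1 : (algebraMap ℚ (Quaternion ℝ)) (2 * q₁) * o = (2 * o.re) • o := by
        have : (algebraMap ℚ (Quaternion ℝ)) (2 * q₁) = (((2 * o.re : ℝ)) : Quaternion ℝ) := by
          rw [hq₁]; push_cast; rfl
        rw [this, Quaternion.coe_mul_eq_smul]
      have e2 : (algebraMap ℚ (Quaternion ℝ)) q₂ = (((normSq o : ℝ)) : Quaternion ℝ) := by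
        rw [hq₂]; rfl
      rw [hp]
      simp only [map_add, map_sub, aeval_mul, map_pow, aeval_X, aeval_C]
      rw [e1, e2]
      exact quat_quadratic o
    have hpirr : Irreducible p := by
      rw [hpmonic.irreducible_iff_roots_eq_zero_of_degree_le_three (by omega) (by omega)]
      rw [Multiset.eq_zero_iff_forall_notMem]
      intro x hx
      have hx' : p.IsRoot x := isRoot_of_mem_roots hx
      have : x ^ 2 - 2 * q₁ * x + q₂ = 0 := by
        simpa [hp, IsRoot, eval_pow, eval_mul, eval_add, eval_sub, eval_C, eval_X] using hx'
      have hr : (x : ℝ) ^ 2 - 2 * q₁ * x + q₂ = 0 := by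
        exact_mod_cast congrArg (fun t : ℚ => (t : ℝ)) this
      nlinarith [sq_nonneg ((x : ℝ) - q₁)]
    obtain ⟨P, hPmonic, hPev⟩ := hint
    have hPev' : Polynomial.aeval o (P.map (algebraMap ℤ ℚ)) = 0 := by
      rw [aeval_map_algebraMap]
      exact hPev
    have hdvd : p ∣ P.map (algebraMap ℤ ℚ) := by
      by_contra hnd
      obtain ⟨a, b, hab⟩ := (hpirr.coprime_iff_not_dvd.mpr hnd)
      have := congrArg (Polynomial.aeval o) hab
      rw [map_add, map_mul, map_mul, hproot, mul_zero, zero_add, hPev', mul_zero, map_one] at this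
      exact zero_ne_one this
    obtain ⟨g, hg⟩ := IsIntegrallyClosed.eq_map_mul_C_of_dvd (K := ℚ) hPmonic hdvd
    rw [hpmonic.leadingCoeff, map_one, mul_one] at hg
    refine ⟨g.coeff 0, ?_⟩
    have hc0 : q₂ = p.coeff 0 := by
      rw [hp]
      simp [coeff_X_pow, coeff_C]
    have hc : q₂ = ((g.coeff 0 : ℤ) : ℚ) := by
      rw [hc0, ← hg, coeff_map, eq_intCast]
    rw [hq₂, hc]
    push_cast
    ring

lemma normSq_pos' {c : Quaternion ℝ} (hc : c ≠ 0) : 0 < normSq c :=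
  lt_of_le_of_ne (normSq_nonneg) (Ne.symm (normSq_ne_zero.mpr hc))

lemma idealNorm_image (s : Set (Quaternion ℝ)) (c : Quaternion ℝ) (hc : c ≠ 0) :
    idealNorm ((fun m => m * c) '' s) = normSq c * idealNorm s := by
  have hnc : (0:ℝ) < normSq c := normSq_pos' hc
  unfold idealNorm
  rw [show (normSq c : ℝ) * sSup {t : ℝ | 0 < t ∧ ∀ m ∈ s, ∃ k : ℤ, normSq m = t * k}
      = normSq c • sSup {t : ℝ | 0 < t ∧ ∀ m ∈ s, ∃ k : ℤ, normSq m = t * k} from rfl,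
    ← Real.sSup_smul_of_nonneg hnc.le]
  congr 1
  ext t
  simp only [Set.mem_smul_set, smul_eq_mul, Set.mem_setOf_eq]
  constructor
  · rintro ⟨ht, hall⟩
    refine ⟨t / normSq c, ⟨div_pos ht hnc, fun m hm => ?_⟩, by field_simp⟩
    obtain ⟨k, hk⟩ := hall (m * c) ⟨m, hm, rfl⟩
    rw [map_mul] at hk
    refine ⟨k, ?_⟩
    have h2 : (normSq m : ℝ) * normSq c = t * k := hk
    field_simp
    linarith [h2]
  · rintro ⟨t', ⟨ht', hall⟩, rfl⟩
    refine ⟨mul_pos hnc ht', ?_⟩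
    rintro m ⟨m', hm', rfl⟩
    obtain ⟨k, hk⟩ := hall m' hm'
    exact ⟨k, by rw [map_mul, hk]; ring⟩

lemma idSet_eq_image (O : Subring (Quaternion ℝ)) (u v : Quaternion ℝ) (hv : v ≠ 0) :
    idSet O u v = (fun m => m * v) '' idSet O (u * v⁻¹) 1 := by
  ext m
  constructor
  · rintro ⟨o₁, h₁, o₂, h₂, rfl⟩
    refine ⟨o₁ * (u * v⁻¹) + o₂ * 1, ⟨o₁, h₁, o₂, h₂, rfl⟩, ?_⟩
    simp only [mul_one, add_mul, mul_assoc]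
    rw [inv_mul_cancel₀ hv, mul_one]
  · rintro ⟨m', ⟨o₁, h₁, o₂, h₂, rfl⟩, rfl⟩
    refine ⟨o₁, h₁, o₂, h₂, ?_⟩
    simp only [mul_one, add_mul, mul_assoc]
    rw [inv_mul_cancel₀ hv, mul_one]

lemma idSet_zero (O : Subring (Quaternion ℝ)) (u : Quaternion ℝ) :
    idSet O u 0 = (fun m => m * u) '' (O : Set (Quaternion ℝ)) := by
  ext m
  constructor
  · rintro ⟨o₁, h₁, o₂, h₂, rfl⟩
    exact ⟨o₁, h₁, by simp⟩
  · rintro ⟨o, ho, rfl⟩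
    exact ⟨o, ho, 0, zero_mem _, by simp⟩

lemma idealNorm_order (O : Subring (Quaternion ℝ))
    (hint : ∀ o ∈ O, ∃ k : ℤ, (normSq o : ℝ) = (k : ℝ)) :
    idealNorm (O : Set (Quaternion ℝ)) = 1 := by
  refine IsGreatest.csSup_eq ⟨⟨one_pos, fun m hm => ?_⟩, fun t ht => ?_⟩
  · obtain ⟨k, hk⟩ := hint m hm
    exact ⟨k, by rw [hk, one_mul]⟩
  · obtain ⟨htpos, hall⟩ := ht
    obtain ⟨k, hk⟩ := hall 1 (one_mem O)
    rw [map_one] at hk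
    have hkpos : (0:ℝ) < (k:ℝ) := by nlinarith
    have hk1 : (1:ℝ) ≤ (k:ℝ) := by exact_mod_cast Int.cast_pos.mp hkpos
    nlinarith

lemma theta_key (z u w : Quaternion ℝ) :
    (normSq (z * w - u) : ℝ) = normSq u - 2 * (star u * z * w).re + normSq z * normSq w := by
  simp [Quaternion.normSq_def', Quaternion.re_mul, Quaternion.imI_mul,
    Quaternion.imJ_mul, Quaternion.imK_mul]
  ring

lemma theta_eq (z : Quaternion ℝ) (r : ℝ) (u v : Quaternion ℝ) (hv : v ≠ 0) :
    thetaEval z r u v = ((normSq (z - u * v⁻¹) + r ^ 2) * normSq v) / r := by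
  unfold thetaEval
  congr 1
  have h1 : (z - u * v⁻¹) * v = z * v - u := by
    rw [sub_mul, mul_assoc, inv_mul_cancel₀ hv, mul_one]
  have h2 : (normSq (z - u * v⁻¹) : ℝ) * normSq v = normSq (z * v - u) := by
    rw [← map_mul, h1]
  rw [theta_key z u v] at h2
  nlinarith [h2]

lemma theta_zero (z : Quaternion ℝ) (r : ℝ) (u : Quaternion ℝ) :
    thetaEval z r u 0 = normSq u / r := by
  simp [thetaEval]

end AuxLemmas

/-- Proposition 3.3 (2): for `x = (z,r)` in the upper halfspace and
`α = [u : v] ∈ ℙ¹_r(A)` with `u, v ∈ O`, one has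
`d_α(x) = Θ(x)(u,v) / n(Ou + Ov)`, where for `α ∈ A`,
`d_α(z,r) = (n(z-α) + r²)/(r·n(Oα + O))` and `d_∞(z,r) = 1/r`. -/
theorem dist_to_cusp_eq_theta_div_norm (A : Subalgebra ℚ (Quaternion ℝ))
    (O : Subring (Quaternion ℝ)) (hA : IsDefiniteQuatAlg A) (hO : IsMaximalOrder A O)
    (z : Quaternion ℝ) (r : ℝ) (hr : 0 < r) (u v : Quaternion ℝ)
    (hu : u ∈ O) (hv : v ∈ O) (huv : (u, v) ≠ (0, 0)) :
    (v ≠ 0 →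
      (normSq (z - u * v⁻¹) + r ^ 2) / (r * idealNorm (idSet O (u * v⁻¹) 1))
        = thetaEval z r u v / idealNorm (idSet O u v)) ∧
    (v = 0 → 1 / r = thetaEval z r u v / idealNorm (idSet O u v)) := by
  have hint : ∀ o ∈ O, ∃ k : ℤ, (normSq o : ℝ) = (k : ℝ) := exists_int_normSq A O hA hO.1
  constructor
  · intro hv
    have hnv : (0:ℝ) < normSq v := normSq_pos' hv
    rw [theta_eq z r u v hv, idSet_eq_image O u v hv, idealNorm_image _ v hv]
    set N := (normSq (z - u * v⁻¹) : ℝ) + r ^ 2 with hN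
    set n₁ := idealNorm (idSet O (u * v⁻¹) 1) with hn₁
    by_cases hn : n₁ = 0
    · rw [hn]
      simp
    · field_simp
  · intro hv0
    subst hv0
    have hu0 : u ≠ 0 := by
      intro h
      exact huv (by simp [h])
    have hnu : (0:ℝ) < normSq u := normSq_pos' hu0
    rw [theta_zero, idSet_zero, idealNorm_image _ u hu0, idealNorm_order O hint, mul_one]
    field_simp
end
end

section
/- Let a, b ∈ 𝒪 with b ≠ 0 in a maximal order 𝒪 of a definite quaternion algebra A over ℚ. If a and b are both nonzero, then the inverse of the left fractional ideal 𝒪a + 𝒪b equals a⁻¹𝒪 ∩ b⁻¹𝒪, and consequently the set {x ∈ A : (ax, bx) ∈ 𝒪 × 𝒪} equals (𝒪a + 𝒪b)⁻¹. -/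
open Quaternion

set_option maxHeartbeats 1000000
set_option synthInstance.maxHeartbeats 400000

noncomputable section

/-- The inverse of the left fractional ideal `I` of `O` (given as a subset of
ℍ): `I⁻¹ = {x ∈ A : I x I ⊆ I}`. -/
def idealInv (A : Subalgebra ℚ (Quaternion ℝ)) (I : Set (Quaternion ℝ)) :
    Set (Quaternion ℝ) :=
  {x | x ∈ A ∧ ∀ i ∈ I, ∀ j ∈ I, i * x * j ∈ I}

lemma inv_mem_quatAlg {A : Subalgebra ℚ (Quaternion ℝ)} (hfd : Module.finrank ℚ A = 4)
    {a : Quaternion ℝ} (haA : a ∈ A) (ha0 : a ≠ 0) : a⁻¹ ∈ A := by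
  have : FiniteDimensional ℚ A := FiniteDimensional.of_finrank_pos (by omega)
  set f : A →ₗ[ℚ] A := LinearMap.mulLeft ℚ (⟨a, haA⟩ : A)
  have hinj : Function.Injective f := by
    intro x y hxy
    have : a * (x : Quaternion ℝ) = a * y := congrArg Subtype.val hxy
    exact Subtype.ext (mul_left_cancel₀ ha0 this)
  obtain ⟨y, hy⟩ := (LinearMap.injective_iff_surjective.mp hinj) 1
  have hy' : a * (y : Quaternion ℝ) = 1 := congrArg Subtype.val hy
  rw [inv_eq_of_mul_eq_one_right hy']; exact y.2

variable {O : Subring (Quaternion ℝ)} {a b : Quaternion ℝ}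

lemma idSet_add {m m' : Quaternion ℝ} (hm : m ∈ idSet O a b) (hm' : m' ∈ idSet O a b) :
    m + m' ∈ idSet O a b := by
  obtain ⟨o₁, h1, o₂, h2, rfl⟩ := hm
  obtain ⟨p₁, g1, p₂, g2, rfl⟩ := hm'
  exact ⟨o₁ + p₁, add_mem h1 g1, o₂ + p₂, add_mem h2 g2, by noncomm_ring⟩

lemma idSet_smul {o m : Quaternion ℝ} (ho : o ∈ O) (hm : m ∈ idSet O a b) :
    o * m ∈ idSet O a b := by
  obtain ⟨o₁, h1, o₂, h2, rfl⟩ := hm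
  exact ⟨o * o₁, mul_mem ho h1, o * o₂, mul_mem ho h2, by noncomm_ring⟩

lemma a_mem_idSet : a ∈ idSet O a b :=
  ⟨1, one_mem O, 0, zero_mem O, by noncomm_ring⟩

lemma b_mem_idSet : b ∈ idSet O a b :=
  ⟨0, zero_mem O, 1, one_mem O, by noncomm_ring⟩

lemma idSet_subset (ha : a ∈ O) (hb : b ∈ O) : idSet O a b ⊆ (O : Set (Quaternion ℝ)) := by
  rintro m ⟨o₁, h1, o₂, h2, rfl⟩
  exact add_mem (mul_mem h1 ha) (mul_mem h2 hb)

/-- The left order of the ideal `Oa + Ob`, intersected with `A`. -/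
def leftOrd (A : Subalgebra ℚ (Quaternion ℝ)) (O : Subring (Quaternion ℝ))
    (a b : Quaternion ℝ) : Subring (Quaternion ℝ) where
  carrier := {y | y ∈ A ∧ ∀ i ∈ idSet O a b, y * i ∈ idSet O a b}
  one_mem' := ⟨one_mem A, fun i hi => by simpa using hi⟩
  zero_mem' := ⟨zero_mem A, fun i hi =>
    ⟨0, zero_mem O, 0, zero_mem O, by noncomm_ring⟩⟩
  add_mem' := by
    rintro x y ⟨hxA, hx⟩ ⟨hyA, hy⟩
    refine ⟨add_mem hxA hyA, fun i hi => ?_⟩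
    rw [add_mul]
    exact idSet_add (hx i hi) (hy i hi)
  neg_mem' := by
    rintro x ⟨hxA, hx⟩
    refine ⟨neg_mem hxA, fun i hi => ?_⟩
    rw [neg_mul]
    obtain ⟨o₁, h1, o₂, h2, he⟩ := hx i hi
    exact ⟨-o₁, neg_mem h1, -o₂, neg_mem h2, by rw [he]; noncomm_ring⟩
  mul_mem' := by
    rintro x y ⟨hxA, hx⟩ ⟨hyA, hy⟩
    refine ⟨mul_mem hxA hyA, fun i hi => ?_⟩
    rw [mul_assoc]
    exact hx _ (hy i hi)

lemma fg_of_le_fg {G : Type*} [AddCommGroup G] {N M : Submodule ℤ G} (h : N ≤ M)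
    (hM : M.FG) : N.FG := by
  have : IsNoetherian ℤ M := isNoetherian_of_fg_of_noetherian M hM
  have h1 : (N.comap M.subtype).FG := IsNoetherian.noetherian _
  have h2 : (N.comap M.subtype).map M.subtype = N := by
    rw [Submodule.map_comap_eq, Submodule.range_subtype, inf_eq_right.mpr h]
  rw [← h2]
  exact h1.map _

lemma leftOrd_eq (A : Subalgebra ℚ (Quaternion ℝ)) (hA : IsDefiniteQuatAlg A)
    (hO : IsMaximalOrder A O) (ha : a ∈ O) (hb : b ∈ O) (ha0 : a ≠ 0) :
    leftOrd A O a b = O := by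
  have hOsub : O ≤ leftOrd A O a b := fun o ho => ⟨hO.1.1 ho, fun i hi => idSet_smul ho hi⟩
  refine hO.2 _ ⟨fun y hy => hy.1, ?_, ?_⟩ hOsub
  · -- finite generation
    obtain ⟨s, hs⟩ := hO.1.2.1
    have hOfg : (AddSubgroup.toIntSubmodule O.toAddSubgroup).FG := by
      rw [Submodule.fg_iff_addSubgroup_fg, AddSubgroup.toIntSubmodule_toAddSubgroup]
      exact ⟨s, hs⟩
    set φ := (AddMonoidHom.mulRight (a⁻¹ : Quaternion ℝ)).toIntLinearMap
    have hMfg : ((AddSubgroup.toIntSubmodule O.toAddSubgroup).map φ).FG := hOfg.map φ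
    have hle : AddSubgroup.toIntSubmodule (leftOrd A O a b).toAddSubgroup ≤
        (AddSubgroup.toIntSubmodule O.toAddSubgroup).map φ := by
      rintro y ⟨hyA, hy⟩
      refine ⟨y * a, idSet_subset ha hb (hy a a_mem_idSet), ?_⟩
      show y * a * a⁻¹ = y
      exact mul_inv_cancel_right₀ ha0 y
    have := fg_of_le_fg hle hMfg
    rw [Submodule.fg_iff_addSubgroup_fg, AddSubgroup.toIntSubmodule_toAddSubgroup] at this
    exact this
  · -- spans A
    refine le_antisymm ?_ ?_
    · rw [Submodule.span_le]
      exact fun y hy => hy.1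
    · rw [← hO.1.2.2]
      exact Submodule.span_mono hOsub

lemma idealInv_eq (A : Subalgebra ℚ (Quaternion ℝ)) (hA : IsDefiniteQuatAlg A)
    (hO : IsMaximalOrder A O) (ha : a ∈ O) (hb : b ∈ O) (ha0 : a ≠ 0) (hb0 : b ≠ 0) :
    idealInv A (idSet O a b) = {x : Quaternion ℝ | x ∈ A ∧ a * x ∈ O ∧ b * x ∈ O} := by
  have hlo := leftOrd_eq A hA hO ha hb ha0
  ext x
  constructor
  · rintro ⟨hxA, hx⟩
    have key : ∀ c : Quaternion ℝ, c ∈ O → c ∈ idSet O a b → c * x ∈ O := by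
      intro c hcO hcI
      have : c * x ∈ leftOrd A O a b :=
        ⟨mul_mem (hO.1.1 hcO) hxA, fun j hj => hx c hcI j hj⟩
      rw [hlo] at this
      exact this
    exact ⟨hxA, key a ha a_mem_idSet, key b hb b_mem_idSet⟩
  · rintro ⟨hxA, hax, hbx⟩
    refine ⟨hxA, ?_⟩
    rintro i ⟨o₁, h1, o₂, h2, rfl⟩ j hj
    have hix : (o₁ * a + o₂ * b) * x = o₁ * (a * x) + o₂ * (b * x) := by noncomm_ring
    rw [hix]
    exact idSet_smul (add_mem (mul_mem h1 hax) (mul_mem h2 hbx)) hj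

/-- For nonzero `a, b` in a maximal order `O` of a definite quaternion algebra
`A` over ℚ, the inverse of the left ideal `Oa + Ob` is `a⁻¹O ∩ b⁻¹O`, and
consequently `{x ∈ A : (ax, bx) ∈ O × O} = (Oa + Ob)⁻¹`. -/
theorem inv_of_ideal_gen_by_two (A : Subalgebra ℚ (Quaternion ℝ))
    (O : Subring (Quaternion ℝ)) (hA : IsDefiniteQuatAlg A) (hO : IsMaximalOrder A O)
    (a b : Quaternion ℝ) (ha : a ∈ O) (hb : b ∈ O) (ha0 : a ≠ 0) (hb0 : b ≠ 0) :
    idealInv A (idSet O a b)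
        = {x | ∃ o ∈ O, x = a⁻¹ * o} ∩ {x | ∃ o ∈ O, x = b⁻¹ * o} ∧
    {x : Quaternion ℝ | x ∈ A ∧ a * x ∈ O ∧ b * x ∈ O} = idealInv A (idSet O a b) := by
  have key := idealInv_eq A hA hO ha hb ha0 hb0
  constructor
  · rw [key]
    ext x
    constructor
    · rintro ⟨hxA, hax, hbx⟩
      exact ⟨⟨a * x, hax, (inv_mul_cancel_left₀ ha0 x).symm⟩,
             ⟨b * x, hbx, (inv_mul_cancel_left₀ hb0 x).symm⟩⟩
    · rintro ⟨⟨o, ho, rfl⟩, ⟨p, hp, he⟩⟩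
      have haA := inv_mem_quatAlg hA.1 (hO.1.1 ha) ha0
      refine ⟨mul_mem haA (hO.1.1 ho), ?_, ?_⟩
      · rw [mul_inv_cancel_left₀ ha0]; exact ho
      · rw [he, mul_inv_cancel_left₀ hb0]; exact hp
  · exact key.symm
end
end
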